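/- Assume additionally that ∫_Ω H(t,x,y) dy ≤ min(1, C₀ d(x)/√t) for all t > 0 and x ∈ Ω, for some constant C₀ ≥ 1. Then there exists γ > 0 depending only on C₀ such that for every convex differentiable Φ : ℝ → ℝ with Φ(0) = 0, every bounded measurable f : Ω → ℝ, and every x ∈ Ω at which Λf(x) and Λ(Φ∘f)(x) are defined by absolutely convergent integrals, one has Φ'(f(x)) (Λf)(x) − (Λ(Φ∘f))(x) ≥ (γ/d(x)) · ( f(x) Φ'(f(x)) − Φ(f(x)) ), and the right-hand side is nonnegative. -/

import Mathlib

open MeasureTheory Set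
open scoped ENNReal RealInnerProductSpace

/-- The normalizing constant `c₁ = (∫₀^∞ (1 − e^(−τ)) τ^(−3/2) dτ)⁻¹`. -/
noncomputable def cOne : ℝ :=
  (∫ τ in Set.Ioi (0:ℝ), (1 - Real.exp (-τ)) * τ ^ (-(3:ℝ)/2))⁻¹

/-- `(Λf)(x) = c₁ ∫₀^∞ t^(−3/2) ( f(x) − ∫_Ω H(t,x,y) f(y) dy ) dt`,
the square root of the Dirichlet Laplacian when `H` is the Dirichlet heat kernel of `Ω`. -/
noncomputable def Lam {d : ℕ} (Ω : Set (EuclideanSpace ℝ (Fin d)))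
    (H : ℝ → EuclideanSpace ℝ (Fin d) → EuclideanSpace ℝ (Fin d) → ℝ)
    (f : EuclideanSpace ℝ (Fin d) → ℝ) (x : EuclideanSpace ℝ (Fin d)) : ℝ :=
  cOne * ∫ t in Set.Ioi (0:ℝ), t ^ (-(3:ℝ)/2) * (f x - ∫ y in Ω, H t x y * f y)

/-- `Λf(x)` is defined by absolutely convergent integrals. -/
def LamDefined {d : ℕ} (Ω : Set (EuclideanSpace ℝ (Fin d)))
    (H : ℝ → EuclideanSpace ℝ (Fin d) → EuclideanSpace ℝ (Fin d) → ℝ)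
    (f : EuclideanSpace ℝ (Fin d) → ℝ) (x : EuclideanSpace ℝ (Fin d)) : Prop :=
  (∀ t ∈ Set.Ioi (0:ℝ), IntegrableOn (fun y => H t x y * f y) Ω) ∧
    IntegrableOn (fun t : ℝ => t ^ (-(3:ℝ)/2) * (f x - ∫ y in Ω, H t x y * f y)) (Set.Ioi 0)

/-- boundary-repulsive Córdoba–Córdoba inequality, case `s = 1`.
Under the heat-kernel mass bound `∫_Ω H(t,x,·) ≤ min(1, C₀ d(x)/√t)`, there is `γ > 0`
depending only on `C₀` such that for convex differentiable `Φ` with `Φ(0) = 0` and bounded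
measurable `f`, at every point where the integrals converge absolutely,
`Φ'(f(x)) Λf(x) − Λ(Φ∘f)(x) ≥ (γ/d(x)) (f(x)Φ'(f(x)) − Φ(f(x))) ≥ 0`. -/

lemma tangent_line {Φ Φ' : ℝ → ℝ} (hconv : ConvexOn ℝ Set.univ Φ)
    (hderiv : ∀ s, HasDerivAt Φ (Φ' s) s) (a b : ℝ) :
    Φ a + Φ' a * (b - a) ≤ Φ b := by
  rcases lt_trichotomy a b with h | rfl | h
  · have h1 := hconv.le_slope_of_hasDerivAt (mem_univ a) (mem_univ b) h (hderiv a)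
    rw [slope_def_field, le_div_iff₀ (by linarith)] at h1
    nlinarith [h1]
  · simp
  · have h1 := hconv.slope_le_of_hasDerivAt (mem_univ b) (mem_univ a) h (hderiv a)
    rw [slope_def_field, div_le_iff₀ (by linarith)] at h1
    nlinarith [h1]

lemma c1_integrable :
    IntegrableOn (fun τ : ℝ => (1 - Real.exp (-τ)) * τ ^ (-(3:ℝ)/2)) (Set.Ioi 0) := by
  have hmeas : ∀ s : Set ℝ, AEStronglyMeasurable
      (fun τ : ℝ => (1 - Real.exp (-τ)) * τ ^ (-(3:ℝ)/2)) (volume.restrict s) := by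
    intro s
    apply Measurable.aestronglyMeasurable
    fun_prop
  have h1 : IntegrableOn (fun τ : ℝ => (1 - Real.exp (-τ)) * τ ^ (-(3:ℝ)/2)) (Set.Ioc 0 1) := by
    have hb : IntegrableOn (fun τ : ℝ => τ ^ (-(1:ℝ)/2)) (Set.Ioc 0 1) := by
      have := intervalIntegral.intervalIntegrable_rpow' (r := -(1:ℝ)/2) (a := 0) (b := 1)
        (by norm_num)
      rwa [intervalIntegrable_iff_integrableOn_Ioc_of_le (by norm_num)] at this
    refine hb.integrable.mono' (hmeas _) ?_
    filter_upwards [ae_restrict_mem measurableSet_Ioc] with τ hτ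
    have hτ0 : (0:ℝ) < τ := hτ.1
    have he : Real.exp (-τ) ≤ 1 := Real.exp_le_one_iff.mpr (by linarith)
    have h1e : 1 - Real.exp (-τ) ≤ τ := by nlinarith [Real.add_one_le_exp (-τ)]
    have hp : (0:ℝ) ≤ τ ^ (-(3:ℝ)/2) := Real.rpow_nonneg hτ0.le _
    rw [Real.norm_eq_abs, abs_of_nonneg (mul_nonneg (by linarith) hp)]
    calc (1 - Real.exp (-τ)) * τ ^ (-(3:ℝ)/2) ≤ τ * τ ^ (-(3:ℝ)/2) :=
          mul_le_mul_of_nonneg_right h1e hp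
      _ = τ ^ (-(1:ℝ)/2) := by
          nth_rewrite 1 [← Real.rpow_one τ]
          rw [← Real.rpow_add hτ0]; norm_num
  have h2 : IntegrableOn (fun τ : ℝ => (1 - Real.exp (-τ)) * τ ^ (-(3:ℝ)/2)) (Set.Ioi 1) := by
    have hb : IntegrableOn (fun τ : ℝ => τ ^ (-(3:ℝ)/2)) (Set.Ioi 1) :=
      integrableOn_Ioi_rpow_of_lt (by norm_num) one_pos
    refine hb.integrable.mono' (hmeas _) ?_
    filter_upwards [ae_restrict_mem measurableSet_Ioi] with τ hτ
    have hτ0 : (0:ℝ) < τ := lt_trans one_pos hτ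
    have he : Real.exp (-τ) ≤ 1 := Real.exp_le_one_iff.mpr (by linarith)
    have hp : (0:ℝ) ≤ τ ^ (-(3:ℝ)/2) := Real.rpow_nonneg hτ0.le _
    rw [Real.norm_eq_abs, abs_of_nonneg (mul_nonneg (by linarith) hp)]
    nlinarith [Real.exp_pos (-τ)]
  have := h1.union h2
  rwa [Set.Ioc_union_Ioi_eq_Ioi (by norm_num : (0:ℝ) ≤ 1)] at this

lemma cOne_integral_pos :
    0 < ∫ τ in Set.Ioi (0:ℝ), (1 - Real.exp (-τ)) * τ ^ (-(3:ℝ)/2) := by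
  rw [setIntegral_pos_iff_support_of_nonneg_ae ?_ c1_integrable]
  · refine lt_of_lt_of_le ?_ (measure_mono (?_ : Set.Ioi (0:ℝ) ⊆ _))
    · simp [Real.volume_Ioi]
    · intro τ hτ
      have hτ0 : (0:ℝ) < τ := hτ
      have he : Real.exp (-τ) < 1 := Real.exp_lt_one_iff.mpr (by linarith)
      have hp : (0:ℝ) < τ ^ (-(3:ℝ)/2) := Real.rpow_pos_of_pos hτ0 _
      exact ⟨ne_of_gt (by nlinarith), hτ⟩
  · filter_upwards [ae_restrict_mem measurableSet_Ioi] with τ hτ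
    have hτ0 : (0:ℝ) < τ := hτ
    have he : Real.exp (-τ) ≤ 1 := Real.exp_le_one_iff.mpr (by linarith)
    exact mul_nonneg (by linarith) (Real.rpow_nonneg hτ0.le _)

theorem stmt6 (C₀ : ℝ) (hC₀ : 1 ≤ C₀) :
    ∃ γ : ℝ, 0 < γ ∧
      ∀ (d : ℕ) (Ω : Set (EuclideanSpace ℝ (Fin d))), IsOpen Ω →
      ∀ H : ℝ → EuclideanSpace ℝ (Fin d) → EuclideanSpace ℝ (Fin d) → ℝ,
        (∀ t x y, 0 ≤ H t x y) →
        (∀ t > (0:ℝ), ∀ x ∈ Ω, IntegrableOn (fun y => H t x y) Ω ∧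
          (∫ y in Ω, H t x y) ≤ min 1 (C₀ * Metric.infDist x Ωᶜ / Real.sqrt t)) →
      ∀ (Φ Φ' : ℝ → ℝ), ConvexOn ℝ Set.univ Φ → (∀ s, HasDerivAt Φ (Φ' s) s) → Φ 0 = 0 →
      ∀ f : EuclideanSpace ℝ (Fin d) → ℝ, Measurable f → (∃ C, ∀ x, |f x| ≤ C) →
      ∀ x ∈ Ω, LamDefined Ω H f x → LamDefined Ω H (fun y => Φ (f y)) x →
        0 ≤ f x * Φ' (f x) - Φ (f x) ∧
        γ / Metric.infDist x Ωᶜ * (f x * Φ' (f x) - Φ (f x))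
          ≤ Φ' (f x) * Lam Ω H f x - Lam Ω H (fun y => Φ (f y)) x := by
  have hC0 : (0:ℝ) < C₀ := lt_of_lt_of_le one_pos hC₀
  have hc1 : 0 < cOne := by unfold cOne; exact inv_pos.mpr cOne_integral_pos
  refine ⟨cOne / (2 * C₀), by positivity, ?_⟩
  intro d Ω hΩ H hH hmass Φ Φ' hconv hderiv hΦ0 f hfmeas hfbd x hx hLf hLΦ
  set a := f x with ha
  set δ := Metric.infDist x Ωᶜ with hδ
  have hδ0 : 0 ≤ δ := Metric.infDist_nonneg
  have hA : 0 ≤ a * Φ' a - Φ a := by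
    have := tangent_line hconv hderiv a 0
    rw [hΦ0] at this; nlinarith
  refine ⟨hA, ?_⟩
  have hI1 : IntegrableOn
      (fun t : ℝ => t ^ (-(3:ℝ)/2) * (a - ∫ y in Ω, H t x y * f y)) (Set.Ioi 0) := hLf.2
  have hLΦ2 : IntegrableOn
      (fun t : ℝ => t ^ (-(3:ℝ)/2) * (Φ a - ∫ y in Ω, H t x y * Φ (f y))) (Set.Ioi 0) := hLΦ.2
  set g : ℝ → ℝ := fun t => t ^ (-(3:ℝ)/2) *
    (Φ' a * (a - ∫ y in Ω, H t x y * f y) - (Φ a - ∫ y in Ω, H t x y * Φ (f y))) with hg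
  have hg_int : IntegrableOn g (Set.Ioi 0) := by
    have hgeq : g = fun t : ℝ => Φ' a * (t ^ (-(3:ℝ)/2) * (a - ∫ y in Ω, H t x y * f y))
        - t ^ (-(3:ℝ)/2) * (Φ a - ∫ y in Ω, H t x y * Φ (f y)) := by
      funext t; rw [hg]; ring
    rw [hgeq]; exact (hI1.const_mul _).sub hLΦ2
  have hm01 : ∀ t ∈ Set.Ioi (0:ℝ),
      0 ≤ (∫ y in Ω, H t x y) ∧ (∫ y in Ω, H t x y) ≤ 1 := fun t ht =>
    ⟨setIntegral_nonneg hΩ.measurableSet (fun y _ => hH t x y),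
     le_trans (hmass t ht x hx).2 (min_le_left _ _)⟩
  have hKey : ∀ t ∈ Set.Ioi (0:ℝ),
      (1 - ∫ y in Ω, H t x y) * (a * Φ' a - Φ a)
        ≤ Φ' a * (a - ∫ y in Ω, H t x y * f y) - (Φ a - ∫ y in Ω, H t x y * Φ (f y)) := by
    intro t ht
    have hHint := (hmass t ht x hx).1
    have hHf : IntegrableOn (fun y => H t x y * f y) Ω := hLf.1 t ht
    have hHΦ : IntegrableOn (fun y => H t x y * Φ (f y)) Ω := hLΦ.1 t ht
    have hfun : (fun y => H t x y * (Φ a + Φ' a * (f y - a)))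
        = fun y => (Φ a - Φ' a * a) * H t x y + Φ' a * (H t x y * f y) := by
      funext y; ring
    have hint : IntegrableOn (fun y => H t x y * (Φ a + Φ' a * (f y - a))) Ω := by
      rw [hfun]; exact (hHint.const_mul _).add (hHf.const_mul _)
    have hkey := setIntegral_mono_on hint hHΦ hΩ.measurableSet
      (fun y _ => mul_le_mul_of_nonneg_left (tangent_line hconv hderiv a (f y)) (hH t x y))
    rw [hfun, integral_add (hHint.const_mul _) (hHf.const_mul _),
      integral_const_mul, integral_const_mul] at hkey
    nlinarith [hkey]
  have hg_nonneg : ∀ t ∈ Set.Ioi (0:ℝ), 0 ≤ g t := by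
    intro t ht
    have h1 := hKey t ht
    have h2 : 0 ≤ (1 - ∫ y in Ω, H t x y) * (a * Φ' a - Φ a) :=
      mul_nonneg (by linarith [(hm01 t ht).2]) hA
    exact mul_nonneg (Real.rpow_nonneg (le_of_lt ht) _) (by linarith)
  have hLam1 : Lam Ω H f x
      = cOne * ∫ t in Set.Ioi (0:ℝ), t ^ (-(3:ℝ)/2) * (a - ∫ y in Ω, H t x y * f y) := rfl
  have hLam2 : Lam Ω H (fun y => Φ (f y)) x
      = cOne * ∫ t in Set.Ioi (0:ℝ), t ^ (-(3:ℝ)/2) * (Φ a - ∫ y in Ω, H t x y * Φ (f y)) := rfl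
  have hsplit : Φ' a * Lam Ω H f x - Lam Ω H (fun y => Φ (f y)) x
      = cOne * ∫ t in Set.Ioi (0:ℝ), g t := by
    have heq : ∫ t in Set.Ioi (0:ℝ), g t
        = Φ' a * (∫ t in Set.Ioi (0:ℝ), t ^ (-(3:ℝ)/2) * (a - ∫ y in Ω, H t x y * f y))
          - ∫ t in Set.Ioi (0:ℝ), t ^ (-(3:ℝ)/2) * (Φ a - ∫ y in Ω, H t x y * Φ (f y)) := by
      rw [← integral_const_mul, ← integral_sub (hI1.const_mul _) hLΦ2]
      congr 1; funext t; rw [hg]; ring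
    rw [hLam1, hLam2, heq]; ring
  rcases eq_or_lt_of_le hδ0 with h0 | hδpos
  · rw [hsplit, ← h0, div_zero, zero_mul]
    exact mul_nonneg hc1.le (setIntegral_nonneg measurableSet_Ioi hg_nonneg)
  · set T : ℝ := (2 * C₀ * δ)^2 with hT
    have hTpos : 0 < T := by positivity
    have h2c : 0 < 2 * C₀ * δ := by positivity
    have hsqrtT : Real.sqrt T = 2 * C₀ * δ := Real.sqrt_sq (by positivity)
    have hpt : ∀ t ∈ Set.Ioi T, t ^ (-(3:ℝ)/2) * ((a * Φ' a - Φ a)/2) ≤ g t := by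
      intro t ht
      have htT : T < t := ht
      have ht0 : (0:ℝ) < t := lt_trans hTpos htT
      have hst : 2 * C₀ * δ ≤ Real.sqrt t := hsqrtT ▸ Real.sqrt_le_sqrt htT.le
      have hstpos : 0 < Real.sqrt t := lt_of_lt_of_le h2c hst
      have hm := (hmass t ht0 x hx).2
      rw [← hδ] at hm
      have hhalf : (∫ y in Ω, H t x y) ≤ 1/2 := by
        refine le_trans (le_trans hm (min_le_right _ _)) ?_
        rw [div_le_iff₀ hstpos]
        nlinarith
      have h1 := hKey t ht0
      have h2 : (a * Φ' a - Φ a)/2 ≤ (1 - ∫ y in Ω, H t x y) * (a * Φ' a - Φ a) := by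
        nlinarith
      exact mul_le_mul_of_nonneg_left (by linarith) (Real.rpow_nonneg ht0.le _)
    have hδne : δ ≠ 0 := ne_of_gt hδpos
    have hCne : C₀ ≠ 0 := ne_of_gt hC0
    have hrint : IntegrableOn (fun t : ℝ => t ^ (-(3:ℝ)/2) * ((a * Φ' a - Φ a)/2)) (Set.Ioi T) :=
      (integrableOn_Ioi_rpow_of_lt (by norm_num) hTpos).mul_const _
    have hstep2 : ∫ t in Set.Ioi T, t ^ (-(3:ℝ)/2) * ((a * Φ' a - Φ a)/2) ≤ ∫ t in Set.Ioi T, g t :=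
      setIntegral_mono_on hrint (hg_int.mono_set (Set.Ioi_subset_Ioi hTpos.le))
        measurableSet_Ioi hpt
    have hstep1 : ∫ t in Set.Ioi T, g t ≤ ∫ t in Set.Ioi (0:ℝ), g t := by
      refine setIntegral_mono_set hg_int ?_
        (HasSubset.Subset.eventuallyLE (Set.Ioi_subset_Ioi hTpos.le))
      filter_upwards [ae_restrict_mem measurableSet_Ioi] with t ht using hg_nonneg t ht
    have hint_rpow : ∫ t in Set.Ioi T, t ^ (-(3:ℝ)/2) = 2 / (2 * C₀ * δ) := by
      rw [integral_Ioi_rpow_of_lt (by norm_num) hTpos]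
      have hTe : T ^ (-(3:ℝ)/2 + 1) = (2 * C₀ * δ)⁻¹ := by
        have h1 : (-(3:ℝ)/2 + 1) = -(1/2) := by norm_num
        rw [h1, Real.rpow_neg hTpos.le, ← Real.sqrt_eq_rpow, hsqrtT]
      rw [hTe]
      field_simp
      ring
    have hval : ∫ t in Set.Ioi T, t ^ (-(3:ℝ)/2) * ((a * Φ' a - Φ a)/2)
        = (a * Φ' a - Φ a) / (2 * C₀ * δ) := by
      rw [integral_mul_const, hint_rpow]
      field_simp
    rw [hsplit]
    have hfinal : (a * Φ' a - Φ a) / (2 * C₀ * δ) ≤ ∫ t in Set.Ioi (0:ℝ), g t :=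
      le_trans (hval ▸ hstep2) hstep1
    calc cOne / (2 * C₀) / δ * (a * Φ' a - Φ a)
        = cOne * ((a * Φ' a - Φ a) / (2 * C₀ * δ)) := by
          field_simp
          try ring
      _ ≤ cOne * ∫ t in Set.Ioi (0:ℝ), g t := mul_le_mul_of_nonneg_left hfinal hc1.le
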